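/- arXiv:1003.3700 — 8 statements merged into one kernel-verified Lean document; each statement's English description precedes it below -/
import Mathlib

section
/- Let S be a finite set of points in a metric space. Define a graph on S by declaring {x,y} an edge if and only if x ≠ y and there is no finite sequence x = k₀, k₁, …, k_m = y of points of S with max_{1≤i≤m} d(k_{i−1}, k_i) < d(x, y). Then this graph is connected: for any two points x, y of S there is a path of edges in the graph joining x to y. -/
/-- The MST graph on a finite set `S` of points in a metric space, with edges
`{x,y}` iff `x ≠ y` and there is no finite sequence `x = k₀, k₁, …, k_m = y` of
points of `S` all of whose steps are strictly shorter than `dist x y`,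
is connected: any two points of `S` are joined by a path of edges. -/
theorem mst_graph_connected {α : Type*} [MetricSpace α] (S : Finset α)
    (G : SimpleGraph {x // x ∈ S})
    (hG : ∀ x y : {x // x ∈ S}, G.Adj x y ↔
      (x ≠ y ∧ ¬ ∃ (m : ℕ) (k : ℕ → {x // x ∈ S}), 0 < m ∧ k 0 = x ∧ k m = y ∧
        ∀ i < m, dist (k i : α) (k (i + 1) : α) < dist (x : α) (y : α))) :
    ∀ x y : {x // x ∈ S}, G.Reachable x y := by
  classical
  
  -- measure of a pair: number of pairs with strictly smaller distance
  let μ : {x // x ∈ S} → {x // x ∈ S} → ℕ := fun x y =>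
    (Finset.univ.filter (fun p : {x // x ∈ S} × {x // x ∈ S} => dist (p.1 : α) (p.2 : α) < dist (x : α) (y : α))).card
  have key : ∀ n : ℕ, ∀ x y : {x // x ∈ S}, μ x y ≤ n → G.Reachable x y := by
    intro n
    induction n using Nat.strong_induction_on with
    | _ n ih =>
      intro x y hμ
      by_cases hxy : x = y
      · exact hxy ▸ SimpleGraph.Reachable.refl x
      by_cases hadj : G.Adj x y
      · exact hadj.reachable
      · rw [hG] at hadj
        push_neg at hadj
        obtain ⟨m, k, hm, hk0, hkm, hsteps⟩ := hadj hxy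
        -- each consecutive pair has strictly smaller measure
        have hlt : ∀ i < m, μ (k i) (k (i + 1)) < μ x y := by
          intro i hi
          apply Finset.card_lt_card
          constructor
          · intro p hp
            simp only [Finset.mem_filter, Finset.mem_univ, true_and] at hp ⊢
            exact hp.trans (hsteps i hi)
          · intro hsub
            have := hsub (by
              simp only [Finset.mem_filter, Finset.mem_univ, true_and]
              exact hsteps i hi : (k i, k (i + 1)) ∈
                Finset.univ.filter (fun p : {x // x ∈ S} × {x // x ∈ S} =>
                  dist (p.1 : α) (p.2 : α) < dist (x : α) (y : α)))
            simp only [Finset.mem_filter, Finset.mem_univ, true_and] at this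
            exact lt_irrefl _ this
        have hstep : ∀ i < m, G.Reachable (k i) (k (i + 1)) := by
          intro i hi
          have h1 : μ (k i) (k (i + 1)) < n := lt_of_lt_of_le (hlt i hi) hμ
          exact ih _ h1 _ _ le_rfl
        have chain : ∀ j ≤ m, G.Reachable (k 0) (k j) := by
          intro j hj
          induction j with
          | zero => exact SimpleGraph.Reachable.refl _
          | succ j ihj =>
            exact (ihj (Nat.le_of_succ_le hj)).trans
              (hstep j (Nat.lt_of_succ_le hj))
        have := chain m le_rfl
        rwa [hk0, hkm] at this
  intro x y
  exact key (μ x y) x y le_rfl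
end

section
/- Let S be a set of points in the Euclidean plane ℝ² and let x, y ∈ S with x ≠ y. If there is no point z ∈ S with dist(x,z) < dist(x,y) and dist(z,y) < dist(x,y), then there is no point z ∈ S with dist(z, midpoint(x,y)) < dist(x,y)/2. In other words, every edge of the relative neighborhood graph is an edge of the Gabriel graph. -/
/-- Every edge of the relative neighborhood graph is an edge of the Gabriel graph:
if there is no `z ∈ S` with `dist x z < dist x y` and `dist z y < dist x y`, then
there is no `z ∈ S` strictly inside the open disc whose diameter is the segment
from `x` to `y`. -/
theorem relativeNeighborhood_subset_gabriel
    (S : Set (EuclideanSpace ℝ (Fin 2))) (x y : EuclideanSpace ℝ (Fin 2))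
    (hx : x ∈ S) (hy : y ∈ S) (hxy : x ≠ y)
    (h : ¬ ∃ z ∈ S, dist x z < dist x y ∧ dist z y < dist x y) :
    ¬ ∃ z ∈ S, dist z (midpoint ℝ x y) < dist x y / 2 := by
  rintro ⟨z, hz, hzm⟩
  apply h
  refine ⟨z, hz, ?_, ?_⟩
  · calc dist x z ≤ dist x (midpoint ℝ x y) + dist (midpoint ℝ x y) z :=
        dist_triangle _ _ _
    _ < dist x y / 2 + dist x y / 2 := by
        rw [dist_left_midpoint]
        simp [dist_comm z, abs_of_nonneg]
        linarith [dist_comm z (midpoint ℝ x y) ▸ hzm]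
    _ = dist x y := by ring
  · calc dist z y ≤ dist z (midpoint ℝ x y) + dist (midpoint ℝ x y) y :=
        dist_triangle _ _ _
    _ < dist x y / 2 + dist x y / 2 := by
        rw [dist_midpoint_right]
        simp
        linarith
    _ = dist x y := by ring
end

section
/- Let S be a finite set of points in a metric space. The relative neighborhood graph on S, with edge set {x,y} an edge iff x ≠ y and there is no z ∈ S with d(x,z) < d(x,y) and d(z,y) < d(x,y), is connected: any two points of S are joined by a path of edges. -/
/-- The relative neighborhood graph on a finite set `S` of points in a metric
space — edges `{x,y}` iff `x ≠ y` and no `z ∈ S` has `dist x z < dist x y` and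
`dist z y < dist x y` — is connected: any two points of `S` are joined by a
path of edges. -/
theorem relativeNeighborhood_connected {α : Type*} [MetricSpace α] (S : Finset α)
    (G : SimpleGraph {x // x ∈ S})
    (hG : ∀ x y : {x // x ∈ S}, G.Adj x y ↔
      (x ≠ y ∧ ¬ ∃ z : {x // x ∈ S},
        dist (x : α) (z : α) < dist (x : α) (y : α) ∧
        dist (z : α) (y : α) < dist (x : α) (y : α))) :
    ∀ x y : {x // x ∈ S}, G.Reachable x y := by
  classical
  let m : {x // x ∈ S} × {x // x ∈ S} → ℕ := fun p =>
    (Finset.univ.filter (fun q : {x // x ∈ S} × {x // x ∈ S} =>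
      dist (q.1 : α) (q.2 : α) < dist (p.1 : α) (p.2 : α))).card
  have msub : ∀ (a b x y : {x // x ∈ S}),
      dist (a : α) (b : α) < dist (x : α) (y : α) → m (a, b) < m (x, y) := by
    intro a b x y hlt
    apply Finset.card_lt_card
    constructor
    · intro q hq
      simp only [Finset.mem_filter, Finset.mem_univ, true_and] at hq ⊢
      exact hq.trans hlt
    · intro hsub
      have : (a, b) ∈ Finset.univ.filter (fun q : {x // x ∈ S} × {x // x ∈ S} =>
          dist (q.1 : α) (q.2 : α) < dist (x : α) (y : α)) := by
        simp [hlt]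
      have := hsub this
      simp at this
  have key : ∀ n, ∀ x y : {x // x ∈ S}, m (x, y) ≤ n → G.Reachable x y := by
    intro n
    induction n with
    | zero =>
      intro x y h
      by_cases hxy : x = y
      · subst hxy; exact SimpleGraph.Reachable.refl x
      · apply SimpleGraph.Adj.reachable
        rw [hG]
        refine ⟨hxy, ?_⟩
        rintro ⟨z, hz1, hz2⟩
        have := msub x z x y hz1
        omega
    | succ n ih =>
      intro x y h
      by_cases hxy : x = y
      · subst hxy; exact SimpleGraph.Reachable.refl x
      by_cases hz : ∃ z : {x // x ∈ S},
          dist (x : α) (z : α) < dist (x : α) (y : α) ∧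
          dist (z : α) (y : α) < dist (x : α) (y : α)
      · obtain ⟨z, hz1, hz2⟩ := hz
        have h1 := msub x z x y hz1
        have h2 := msub z y x y hz2
        exact (ih x z (by omega)).trans (ih z y (by omega))
      · exact ((hG x y).mpr ⟨hxy, hz⟩).reachable
  intro x y
  exact key (m (x, y)) x y le_rfl
end

section
/- Let S be a finite set of points in the Euclidean plane ℝ². The Gabriel graph on S, with edge set {x,y} an edge iff x ≠ y and there is no z ∈ S with dist(z, midpoint(x,y)) < dist(x,y)/2, is connected: any two points of S are joined by a path of edges. -/
/-- The Gabriel graph on a finite set `S` of points in the Euclidean plane —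
edges `{x,y}` iff `x ≠ y` and no `z ∈ S` lies strictly inside the open disc
whose diameter is the segment from `x` to `y` — is connected: any two points of
`S` are joined by a path of edges. -/
theorem gabriel_connected (S : Finset (EuclideanSpace ℝ (Fin 2)))
    (G : SimpleGraph {x // x ∈ S})
    (hG : ∀ x y : {x // x ∈ S}, G.Adj x y ↔
      (x ≠ y ∧ ¬ ∃ z : {x // x ∈ S},
        dist (z : EuclideanSpace ℝ (Fin 2)) (midpoint ℝ (x : EuclideanSpace ℝ (Fin 2)) y) <
          dist (x : EuclideanSpace ℝ (Fin 2)) (y : EuclideanSpace ℝ (Fin 2)) / 2)) :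
    ∀ x y : {x // x ∈ S}, G.Reachable x y := by
  classical
  
  have key : ∀ n : ℕ, ∀ x y : {x // x ∈ S},
      (Finset.univ.filter (fun p : {x // x ∈ S} × {x // x ∈ S} =>
        dist (p.1 : EuclideanSpace ℝ (Fin 2)) (p.2 : EuclideanSpace ℝ (Fin 2)) <
          dist (x : EuclideanSpace ℝ (Fin 2)) (y : EuclideanSpace ℝ (Fin 2)))).card ≤ n →
      G.Reachable x y := by
    intro n
    induction n with
    | zero =>
      intro x y hcard
      rcases eq_or_ne x y with rfl | hxy
      · exact ⟨SimpleGraph.Walk.nil⟩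
      · by_cases hadj : G.Adj x y
        · exact hadj.reachable
        · exfalso
          rw [hG] at hadj
          push_neg at hadj
          obtain ⟨z, hz⟩ := hadj hxy
          have hd : (0:ℝ) < dist (x : EuclideanSpace ℝ (Fin 2)) (y : EuclideanSpace ℝ (Fin 2)) := by
            rw [dist_pos]; exact fun h => hxy (Subtype.ext h)
          have hxz : dist (x : EuclideanSpace ℝ (Fin 2)) (z : EuclideanSpace ℝ (Fin 2)) <
              dist (x : EuclideanSpace ℝ (Fin 2)) (y : EuclideanSpace ℝ (Fin 2)) := by
            calc dist (x : EuclideanSpace ℝ (Fin 2)) (z : EuclideanSpace ℝ (Fin 2))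
                ≤ dist (x : EuclideanSpace ℝ (Fin 2))
                    (midpoint ℝ (x : EuclideanSpace ℝ (Fin 2)) y) +
                  dist (midpoint ℝ (x : EuclideanSpace ℝ (Fin 2)) (y : EuclideanSpace ℝ (Fin 2)))
                    (z : EuclideanSpace ℝ (Fin 2)) := dist_triangle _ _ _
              _ < dist (x : EuclideanSpace ℝ (Fin 2)) (y : EuclideanSpace ℝ (Fin 2)) / 2 +
                  dist (x : EuclideanSpace ℝ (Fin 2)) (y : EuclideanSpace ℝ (Fin 2)) / 2 := by
                  have := dist_left_midpoint (𝕜 := ℝ) (x : EuclideanSpace ℝ (Fin 2)) y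
                  rw [dist_comm (midpoint ℝ _ _)]
                  apply add_lt_add_of_le_of_lt
                  · rw [this]; norm_num; linarith
                  · exact hz
              _ = _ := by ring
          have : (x, z) ∈ Finset.univ.filter (fun p : {x // x ∈ S} × {x // x ∈ S} =>
              dist (p.1 : EuclideanSpace ℝ (Fin 2)) (p.2 : EuclideanSpace ℝ (Fin 2)) <
                dist (x : EuclideanSpace ℝ (Fin 2)) (y : EuclideanSpace ℝ (Fin 2))) := by
            simp [hxz]
          have := Finset.card_pos.mpr ⟨_, this⟩
          omega
    | succ n ih =>
      intro x y hcard
      rcases eq_or_ne x y with rfl | hxy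
      · exact ⟨SimpleGraph.Walk.nil⟩
      · by_cases hadj : G.Adj x y
        · exact hadj.reachable
        · rw [hG] at hadj
          push_neg at hadj
          obtain ⟨z, hz⟩ := hadj hxy
          have hd : (0:ℝ) < dist (x : EuclideanSpace ℝ (Fin 2)) (y : EuclideanSpace ℝ (Fin 2)) := by
            rw [dist_pos]; exact fun h => hxy (Subtype.ext h)
          have hmidx : dist (x : EuclideanSpace ℝ (Fin 2))
              (midpoint ℝ (x : EuclideanSpace ℝ (Fin 2)) y) =
              dist (x : EuclideanSpace ℝ (Fin 2)) (y : EuclideanSpace ℝ (Fin 2)) / 2 := by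
            rw [dist_left_midpoint]; norm_num; ring
          have hmidy : dist (y : EuclideanSpace ℝ (Fin 2))
              (midpoint ℝ (x : EuclideanSpace ℝ (Fin 2)) y) =
              dist (x : EuclideanSpace ℝ (Fin 2)) (y : EuclideanSpace ℝ (Fin 2)) / 2 := by
            rw [dist_comm, dist_midpoint_right]; norm_num; ring
          have hxz : dist (x : EuclideanSpace ℝ (Fin 2)) (z : EuclideanSpace ℝ (Fin 2)) <
              dist (x : EuclideanSpace ℝ (Fin 2)) (y : EuclideanSpace ℝ (Fin 2)) := by
            calc dist (x : EuclideanSpace ℝ (Fin 2)) (z : EuclideanSpace ℝ (Fin 2))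
                ≤ dist (x : EuclideanSpace ℝ (Fin 2))
                    (midpoint ℝ (x : EuclideanSpace ℝ (Fin 2)) y) +
                  dist (midpoint ℝ (x : EuclideanSpace ℝ (Fin 2)) (y : EuclideanSpace ℝ (Fin 2)))
                    (z : EuclideanSpace ℝ (Fin 2)) := dist_triangle _ _ _
              _ < dist (x : EuclideanSpace ℝ (Fin 2)) (y : EuclideanSpace ℝ (Fin 2)) / 2 +
                  dist (x : EuclideanSpace ℝ (Fin 2)) (y : EuclideanSpace ℝ (Fin 2)) / 2 := by
                  rw [dist_comm (midpoint ℝ _ _), hmidx]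
                  exact add_lt_add_of_le_of_lt le_rfl hz
              _ = _ := by ring
          have hzy : dist (z : EuclideanSpace ℝ (Fin 2)) (y : EuclideanSpace ℝ (Fin 2)) <
              dist (x : EuclideanSpace ℝ (Fin 2)) (y : EuclideanSpace ℝ (Fin 2)) := by
            calc dist (z : EuclideanSpace ℝ (Fin 2)) (y : EuclideanSpace ℝ (Fin 2))
                ≤ dist (z : EuclideanSpace ℝ (Fin 2))
                    (midpoint ℝ (x : EuclideanSpace ℝ (Fin 2)) y) +
                  dist (midpoint ℝ (x : EuclideanSpace ℝ (Fin 2)) (y : EuclideanSpace ℝ (Fin 2)))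
                    (y : EuclideanSpace ℝ (Fin 2)) := dist_triangle _ _ _
              _ < dist (x : EuclideanSpace ℝ (Fin 2)) (y : EuclideanSpace ℝ (Fin 2)) / 2 +
                  dist (x : EuclideanSpace ℝ (Fin 2)) (y : EuclideanSpace ℝ (Fin 2)) / 2 := by
                  rw [dist_comm (midpoint ℝ _ _), hmidy]
                  exact add_lt_add_of_lt_of_le hz le_rfl
              _ = _ := by ring
          -- subset lemma for the measures
          have sub : ∀ (a b : {x // x ∈ S}),
              dist (a : EuclideanSpace ℝ (Fin 2)) (b : EuclideanSpace ℝ (Fin 2)) <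
                dist (x : EuclideanSpace ℝ (Fin 2)) (y : EuclideanSpace ℝ (Fin 2)) →
              (Finset.univ.filter (fun p : {x // x ∈ S} × {x // x ∈ S} =>
                dist (p.1 : EuclideanSpace ℝ (Fin 2)) (p.2 : EuclideanSpace ℝ (Fin 2)) <
                  dist (a : EuclideanSpace ℝ (Fin 2)) (b : EuclideanSpace ℝ (Fin 2)))).card ≤ n := by
            intro a b hab
            have hss : (Finset.univ.filter (fun p : {x // x ∈ S} × {x // x ∈ S} =>
                dist (p.1 : EuclideanSpace ℝ (Fin 2)) (p.2 : EuclideanSpace ℝ (Fin 2)) <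
                  dist (a : EuclideanSpace ℝ (Fin 2)) (b : EuclideanSpace ℝ (Fin 2)))) ⊂
              (Finset.univ.filter (fun p : {x // x ∈ S} × {x // x ∈ S} =>
                dist (p.1 : EuclideanSpace ℝ (Fin 2)) (p.2 : EuclideanSpace ℝ (Fin 2)) <
                  dist (x : EuclideanSpace ℝ (Fin 2)) (y : EuclideanSpace ℝ (Fin 2)))) := by
              constructor
              · intro p hp
                simp only [Finset.mem_filter, Finset.mem_univ, true_and] at hp ⊢
                exact hp.trans hab
              · intro hcont
                have := hcont (by simp [hab] : (a, b) ∈ _)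
                simp at this
            have := Finset.card_lt_card hss
            omega
          exact (ih x z (sub x z hxz)).trans (ih z y (sub z y hzy))
  intro x y
  exact key _ x y le_rfl
end

section
/- Identify the plane with ℂ and write v₋ = −1/2 and v₊ = 1/2. Let the lune be the intersection of the open discs of radius 1 centered at v₋ and v₊. Let A ⊆ ℂ satisfy A ⊆ lune and −A = A (invariance under z ↦ −z). For distinct x, y ∈ ℂ let A(x,y) be the image of A under the map z ↦ x + (y − x)(z + 1/2) (the orientation-preserving similarity taking v₋ to x and v₊ to y). Let S be a finite subset of ℂ, and define the proximity graph G on S by: {x,y} is an edge iff x ≠ y and A(x,y) contains no point of S. Then G is a well-defined (symmetric) graph and is connected. -/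
/-- Proximity graphs are symmetric and connected. With the plane identified with
`ℂ`, `v₋ = -1/2`, `v₊ = 1/2`, the lune is the intersection of the open unit
discs centered at `v₋` and `v₊`. Let `A ⊆ lune` with `-A = A`, and for distinct
`x, y` let `A(x,y)` be the image of `A` under `z ↦ x + (y - x) * (z + 1/2)`.
On a finite `S ⊆ ℂ`, the relation "`x ≠ y` and `A(x,y)` contains no point of
`S`" is symmetric (so defines a graph), and any graph with this adjacency is
connected. -/
theorem proximity_graph_connected (A : Set ℂ)
    (hlune : A ⊆ {z : ℂ | dist z (-(1/2) : ℂ) < 1 ∧ dist z ((1/2) : ℂ) < 1})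
    (hsymA : ∀ z : ℂ, z ∈ A ↔ -z ∈ A)
    (S : Finset ℂ) (Adj : ℂ → ℂ → Prop)
    (hAdj : ∀ x y : ℂ, Adj x y ↔
      (x ≠ y ∧ ∀ z ∈ S, z ∉ (fun w : ℂ => x + (y - x) * (w + 1/2)) '' A)) :
    (∀ x y : ℂ, Adj x y → Adj y x) ∧
      ∀ G : SimpleGraph {z // z ∈ S},
        (∀ x y : {z // z ∈ S}, G.Adj x y ↔ Adj (x : ℂ) (y : ℂ)) →
        ∀ x y : {z // z ∈ S}, G.Reachable x y := by
  have hsym : ∀ x y : ℂ, Adj x y → Adj y x := by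
    intro x y hxy
    rw [hAdj] at hxy ⊢
    obtain ⟨hne, h⟩ := hxy
    refine ⟨hne.symm, fun z hz hmem => ?_⟩
    obtain ⟨w, hw, he⟩ := hmem
    refine h z hz ⟨-w, (hsymA w).mp hw, ?_⟩
    simp only at he ⊢
    rw [← he]; ring
  refine ⟨hsym, ?_⟩
  intro G hG
  have key : ∀ x y : ℂ, x ∈ S → y ∈ S → x ≠ y → ¬ Adj x y →
      ∃ z ∈ S, dist z x < dist x y ∧ dist z y < dist x y := by
    intro x y hx hy hne hn
    rw [hAdj] at hn
    push_neg at hn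
    obtain ⟨z, hzS, w, hwA, he⟩ := hn hne
    obtain ⟨h1, h2⟩ := hlune hwA
    have hpos : 0 < ‖y - x‖ := by
      rw [norm_pos_iff]
      exact sub_ne_zero.mpr hne.symm
    have hd : dist x y = ‖y - x‖ := by
      exact (Complex.dist_eq x y).trans (norm_sub_rev x y)
    simp only at he
    refine ⟨z, hzS, ?_, ?_⟩
    · have e1 : z - x = (y - x) * (w + 1/2) := by rw [← he]; ring
      have hlt : ‖w + 1/2‖ < 1 := by
        simpa [Complex.dist_eq, sub_neg_eq_add] using h1
      rw [Complex.dist_eq, e1, norm_mul, hd]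
      calc ‖y - x‖ * ‖w + 1/2‖
          < ‖y - x‖ * 1 := mul_lt_mul_of_pos_left hlt hpos
        _ = ‖y - x‖ := mul_one _
    · have e2 : z - y = (y - x) * (w - 1/2) := by rw [← he]; ring
      have hlt : ‖w - 1/2‖ < 1 := by
        simpa [Complex.dist_eq] using h2
      rw [Complex.dist_eq, e2, norm_mul, hd]
      calc ‖y - x‖ * ‖w - 1/2‖
          < ‖y - x‖ * 1 := mul_lt_mul_of_pos_left hlt hpos
        _ = ‖y - x‖ := mul_one _
  -- the "smaller pairs" measure
  set T : ℂ → ℂ → Finset (ℂ × ℂ) :=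
    fun a b => (S ×ˢ S).filter (fun p => dist p.1 p.2 < dist a b) with hT
  have main : ∀ n : ℕ, ∀ a b : {z // z ∈ S}, (T (a : ℂ) (b : ℂ)).card ≤ n →
      G.Reachable a b := by
    intro n
    induction n with
    | zero =>
      intro a b hcard
      by_cases hab : (a : ℂ) = (b : ℂ)
      · exact Subtype.ext hab ▸ (SimpleGraph.Reachable.refl a)
      by_cases hadj : Adj (a : ℂ) (b : ℂ)
      · exact ((hG a b).mpr hadj).reachable
      obtain ⟨z, hzS, hz1, hz2⟩ := key _ _ a.2 b.2 hab hadj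
      have : (z, (b : ℂ)) ∈ T (a : ℂ) (b : ℂ) := by
        simp [hT, Finset.mem_filter, Finset.mem_product, hzS, b.2, hz2]
      have h1 : 0 < (T (a : ℂ) (b : ℂ)).card := Finset.card_pos.mpr ⟨_, this⟩
      omega
    | succ n ih =>
      intro a b hcard
      by_cases hab : (a : ℂ) = (b : ℂ)
      · exact Subtype.ext hab ▸ (SimpleGraph.Reachable.refl a)
      by_cases hadj : Adj (a : ℂ) (b : ℂ)
      · exact ((hG a b).mpr hadj).reachable
      obtain ⟨z, hzS, hz1, hz2⟩ := key _ _ a.2 b.2 hab hadj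
      have haz : dist (a : ℂ) z < dist (a : ℂ) (b : ℂ) := by
        rwa [dist_comm] at hz1
      have hsub1 : T (a : ℂ) z ⊂ T (a : ℂ) (b : ℂ) := by
        constructor
        · intro p hp
          simp only [hT, Finset.mem_filter] at hp ⊢
          exact ⟨hp.1, hp.2.trans haz⟩
        · intro hle
          have : ((a : ℂ), z) ∈ T (a : ℂ) z := by
            apply hle
            simp [hT, Finset.mem_filter, Finset.mem_product, a.2, hzS, haz]
          simp [hT, Finset.mem_filter] at this
      have hsub2 : T z (b : ℂ) ⊂ T (a : ℂ) (b : ℂ) := by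
        constructor
        · intro p hp
          simp only [hT, Finset.mem_filter] at hp ⊢
          exact ⟨hp.1, hp.2.trans hz2⟩
        · intro hle
          have : (z, (b : ℂ)) ∈ T z (b : ℂ) := by
            apply hle
            simp [hT, Finset.mem_filter, Finset.mem_product, hzS, b.2, hz2]
          simp [hT, Finset.mem_filter] at this
      have c1 : (T (a : ℂ) z).card ≤ n := by
        have := Finset.card_lt_card hsub1; omega
      have c2 : (T z (b : ℂ)).card ≤ n := by
        have := Finset.card_lt_card hsub2; omega
      exact (ih a ⟨z, hzS⟩ c1).trans (ih ⟨z, hzS⟩ b c2)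
  intro x y
  exact main _ x y le_rfl
end

section
/- Let x, y, u, v be four pairwise distinct points in the Euclidean plane ℝ². If the open segment from x to y and the open segment from u to v have a common point, then at least one of the following holds: dist(u, midpoint(x,y)) ≤ dist(x,y)/2, or dist(v, midpoint(x,y)) ≤ dist(x,y)/2, or dist(x, midpoint(u,v)) ≤ dist(u,v)/2, or dist(y, midpoint(u,v)) ≤ dist(u,v)/2. -/
open scoped RealInnerProductSpace

private lemma gab_aux (x y u : EuclideanSpace ℝ (Fin 2))
    (h : ⟪x - u, y - u⟫ ≤ 0) :
    dist u (midpoint ℝ x y) ≤ dist x y / 2 := by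
  have h2 : u - midpoint ℝ x y = ((1 : ℝ)/2) • ((u - x) + (u - y)) := by
    rw [midpoint_eq_smul_add]
    match_scalars <;> simp <;> norm_num
  have h' : ⟪u - x, u - y⟫ ≤ 0 := by
    rw [show u - x = -(x - u) by module, show u - y = -(y - u) by module, inner_neg_neg]
    exact h
  have key : ‖(u - x) + (u - y)‖ ≤ ‖x - y‖ := by
    have e1 := norm_add_sq_real (u - x) (u - y)
    have e2 : ‖x - y‖^2 = ‖(u - y) - (u - x)‖^2 := by
      rw [show (u - y) - (u - x) = x - y by module]
    have e3 := norm_sub_sq_real (u - y) (u - x)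
    have hcomm := real_inner_comm (u - y) (u - x)
    have hsq : ‖(u - x) + (u - y)‖^2 ≤ ‖x - y‖^2 := by
      rw [e2, e3, e1]; nlinarith [h']
    nlinarith [norm_nonneg ((u - x) + (u - y)), norm_nonneg (x - y)]
  rw [dist_eq_norm, dist_eq_norm, h2, norm_smul]
  have hn : ‖(1 : ℝ)/2‖ = 1/2 := by rw [Real.norm_eq_abs]; norm_num
  rw [hn]; linarith

set_option maxHeartbeats 1000000 in
/-- Crossing segments and diameter discs (planarity of the Gabriel graph):
if the open segments `(x, y)` and `(u, v)` between four pairwise distinct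
points of the Euclidean plane meet, then one of the four endpoints lies in the
closed disc whose diameter is the other segment. -/
theorem crossing_segments_gabriel (x y u v : EuclideanSpace ℝ (Fin 2))
    (hxy : x ≠ y) (hxu : x ≠ u) (hxv : x ≠ v)
    (hyu : y ≠ u) (hyv : y ≠ v) (huv : u ≠ v)
    (hmeet : (openSegment ℝ x y ∩ openSegment ℝ u v).Nonempty) :
    dist u (midpoint ℝ x y) ≤ dist x y / 2 ∨
    dist v (midpoint ℝ x y) ≤ dist x y / 2 ∨
    dist x (midpoint ℝ u v) ≤ dist u v / 2 ∨
    dist y (midpoint ℝ u v) ≤ dist u v / 2 := by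
  obtain ⟨p, hp1, hp2⟩ := hmeet
  obtain ⟨a, b, ha, hb, hab, hxyp⟩ := hp1
  obtain ⟨c, d, hc, hd, hcd, huvp⟩ := hp2
  obtain ⟨X, hX⟩ : ∃ X, X = x - y := ⟨_, rfl⟩
  obtain ⟨U, hU⟩ : ∃ U, U = u - v := ⟨_, rfl⟩
  have hA : x - p = b • X := by
    rw [hX, ← hxyp]; have hab' : a = 1 - b := by linarith
    subst hab'; module
  have hB : y - p = -(a • X) := by
    rw [hX, ← hxyp]; have hab' : a = 1 - b := by linarith
    subst hab'; module
  have hC : u - p = d • U := by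
    rw [hU, ← huvp]; have hcd' : c = 1 - d := by linarith
    subst hcd'; module
  have hD : v - p = -(c • U) := by
    rw [hU, ← huvp]; have hcd' : c = 1 - d := by linarith
    subst hcd'; module
  have e1 : x - u = b • X - d • U := by
    rw [show x - u = (x - p) - (u - p) by module, hA, hC]
  have e2 : y - u = -(a • X) - d • U := by
    rw [show y - u = (y - p) - (u - p) by module, hB, hC]
  have e3 : x - v = b • X + c • U := by
    rw [show x - v = (x - p) - (v - p) by module, hA, hD]; module
  have e4 : y - v = -(a • X) + c • U := by
    rw [show y - v = (y - p) - (v - p) by module, hB, hD]; module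
  have e5 : u - x = d • U - b • X := by
    rw [show u - x = -(x - u) by module, e1]; module
  have e6 : v - x = -(c • U) - b • X := by
    rw [show v - x = -(x - v) by module, e3]; module
  have e7 : u - y = d • U + a • X := by
    rw [show u - y = -(y - u) by module, e2]; module
  have e8 : v - y = -(c • U) + a • X := by
    rw [show v - y = -(y - v) by module, e4]; module
  have hcomm : ⟪U, X⟫ = ⟪X, U⟫ := real_inner_comm _ _
  set al : ℝ := ⟪X, X⟫ with hal
  set ga : ℝ := ⟪U, U⟫ with hga
  set g : ℝ := ⟪X, U⟫ with hg
  have q1 : ⟪x - u, y - u⟫ = d^2 * ga - a*b*al + d*(a - b)*g := by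
    rw [e1, e2]
    simp only [inner_sub_left, inner_sub_right, inner_neg_left, inner_neg_right,
      real_inner_smul_left, real_inner_smul_right, hcomm, ← hal, ← hga, ← hg]
    ring
  have q2 : ⟪x - v, y - v⟫ = c^2 * ga - a*b*al + c*(b - a)*g := by
    rw [e3, e4]
    simp only [inner_add_left, inner_add_right, inner_neg_left, inner_neg_right,
      real_inner_smul_left, real_inner_smul_right, hcomm, ← hal, ← hga, ← hg]
    ring
  have q3 : ⟪u - x, v - x⟫ = b^2 * al - c*d*ga + b*(c - d)*g := by
    rw [e5, e6]
    simp only [inner_sub_left, inner_sub_right, inner_neg_left, inner_neg_right,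
      real_inner_smul_left, real_inner_smul_right, hcomm, ← hal, ← hga, ← hg]
    ring
  have q4 : ⟪u - y, v - y⟫ = a^2 * al - c*d*ga + a*(d - c)*g := by
    rw [e7, e8]
    simp only [inner_add_left, inner_add_right, inner_neg_left, inner_neg_right,
      real_inner_smul_left, real_inner_smul_right, hcomm, ← hal, ← hga, ← hg]
    ring
  rcases le_total (c*d*ga) (a*b*al) with hle | hle
  · -- c*Q1 + d*Q2 = c*d*ga - a*b*al ≤ 0, so Q1 ≤ 0 or Q2 ≤ 0
    have key : c * ⟪x - u, y - u⟫ + d * ⟪x - v, y - v⟫ = c*d*ga - a*b*al := by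
      rw [q1, q2]; linear_combination (c*d*ga - a*b*al) * hcd
    rcases le_or_gt (⟪x - u, y - u⟫) 0 with h1 | h1
    · exact Or.inl (gab_aux x y u h1)
    · refine Or.inr (Or.inl (gab_aux x y v ?_))
      have hd2 : d * ⟪x - v, y - v⟫ ≤ 0 := by nlinarith [mul_pos hc h1]
      nlinarith [hd2, hd]
  · have key : a * ⟪u - x, v - x⟫ + b * ⟪u - y, v - y⟫ = a*b*al - c*d*ga := by
      rw [q3, q4]; linear_combination (a*b*al - c*d*ga) * hab
    rcases le_or_gt (⟪u - x, v - x⟫) 0 with h3 | h3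
    · exact Or.inr (Or.inr (Or.inl (gab_aux u v x h3)))
    · refine Or.inr (Or.inr (Or.inr (gab_aux u v y ?_)))
      have hb2 : b * ⟪u - y, v - y⟫ ≤ 0 := by nlinarith [mul_pos ha h3]
      nlinarith [hb2, hb]
end

section
/- Let p ≥ 2 be a real number, let S be a set of points in the Euclidean plane ℝ², and let x, y ∈ S with x ≠ y. Suppose that for every z ∈ S with z ≠ x and z ≠ y one has dist(x,z)^p + dist(z,y)^p ≥ dist(x,y)^p (i.e., no two-step route through a third city is cheaper than the direct edge for pth-power costs). Then no point z ∈ S with z ≠ x and z ≠ y satisfies dist(z, midpoint(x,y)) < dist(x,y)/2; that is, (x,y) is an edge of the Gabriel graph. -/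
/-- Real version of `NNReal.add_rpow_le_rpow_add`. -/
lemma real_add_rpow_le_rpow_add {a b q : ℝ} (ha : 0 ≤ a) (hb : 0 ≤ b)
    (hq : 1 ≤ q) : a ^ q + b ^ q ≤ (a + b) ^ q := by
  have := NNReal.add_rpow_le_rpow_add a.toNNReal b.toNNReal hq
  have h2 := NNReal.coe_le_coe.mpr this
  simpa [NNReal.coe_rpow, Real.coe_toNNReal a ha, Real.coe_toNNReal b hb] using h2

/-- Parallelogram-type identity for the midpoint. -/
lemma dist_sq_midpoint_identity (x y z : EuclideanSpace ℝ (Fin 2)) :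
    dist x z ^ 2 + dist z y ^ 2
      = 2 * dist z (midpoint ℝ x y) ^ 2 + dist x y ^ 2 / 2 := by
  have pl := parallelogram_law_with_norm ℝ (x - z) (y - z)
  have h1 : x - z + (y - z) = (2 : ℝ) • (midpoint ℝ x y - z) := by
    rw [smul_sub, two_smul, two_smul, midpoint_add_self]
    abel
  have h2 : x - z - (y - z) = x - y := by abel
  rw [h1, h2, norm_smul] at pl
  have hd : dist x z = ‖x - z‖ := dist_eq_norm x z
  have hd2 : dist z y = ‖y - z‖ := by rw [dist_eq_norm, ← norm_neg]; congr 1; abel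
  have hd3 : dist z (midpoint ℝ x y) = ‖midpoint ℝ x y - z‖ := by
    rw [dist_eq_norm, ← norm_neg]; congr 1; abel
  have hd4 : dist x y = ‖x - y‖ := dist_eq_norm x y
  rw [hd, hd2, hd3, hd4]
  simp only [Real.norm_ofNat] at pl
  nlinarith [pl]

/-- For `p ≥ 2` the network `G_p` is a subgraph of the Gabriel graph:
if for every third city `z ∈ S` the two-step route through `z` is not cheaper
for `p`th-power costs, i.e. `dist x z ^ p + dist z y ^ p ≥ dist x y ^ p`, then
no such `z` lies strictly inside the open disc with diameter the segment from
`x` to `y`. -/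
theorem kumar_subset_gabriel (p : ℝ) (hp : 2 ≤ p)
    (S : Set (EuclideanSpace ℝ (Fin 2))) (x y : EuclideanSpace ℝ (Fin 2))
    (hx : x ∈ S) (hy : y ∈ S) (hxy : x ≠ y)
    (h : ∀ z ∈ S, z ≠ x → z ≠ y →
      dist x y ^ p ≤ dist x z ^ p + dist z y ^ p) :
    ¬ ∃ z ∈ S, z ≠ x ∧ z ≠ y ∧ dist z (midpoint ℝ x y) < dist x y / 2 := by
  rintro ⟨z, hzS, hzx, hzy, hlt⟩
  set a := dist x z with ha
  set b := dist z y with hb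
  set d := dist x y with hd
  have ha0 : 0 ≤ a := dist_nonneg
  have hb0 : 0 ≤ b := dist_nonneg
  have hd0 : 0 ≤ d := dist_nonneg
  have hm0 : 0 ≤ dist z (midpoint ℝ x y) := dist_nonneg
  -- key quadratic inequality
  have hsq : a ^ 2 + b ^ 2 < d ^ 2 := by
    have hid := dist_sq_midpoint_identity x y z
    nlinarith [hid, hlt, hm0]
  -- rpow chain
  have hq1 : (1 : ℝ) ≤ p / 2 := by linarith
  have hq0 : (0 : ℝ) < p / 2 := by linarith
  have e : ∀ t : ℝ, 0 ≤ t → t ^ p = (t ^ 2) ^ (p / 2) := by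
    intro t ht
    rw [← Real.rpow_natCast_mul ht 2 (p / 2)]
    congr 1
    push_cast
    ring
  have h1 : a ^ p + b ^ p ≤ (a ^ 2 + b ^ 2) ^ (p / 2) := by
    rw [e a ha0, e b hb0]
    exact real_add_rpow_le_rpow_add (by positivity) (by positivity) hq1
  have h2 : (a ^ 2 + b ^ 2) ^ (p / 2) < (d ^ 2) ^ (p / 2) :=
    Real.rpow_lt_rpow (by positivity) hsq hq0
  have h3 : a ^ p + b ^ p < d ^ p := by
    rw [e d hd0]; exact lt_of_le_of_lt h1 h2
  exact absurd (h z hzS hzx hzy) (by linarith)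
end

section
/- Let 1 ≤ p ≤ q be real numbers, and let k₀, k₁, …, k_m (m ≥ 1) be points in a metric space. If ∑_{i=1}^m d(k_{i−1}, k_i)^q ≥ d(k₀, k_m)^q, then ∑_{i=1}^m d(k_{i−1}, k_i)^p ≥ d(k₀, k_m)^p. Consequently, every edge of the network G_q is an edge of the network G_p, i.e., the networks G_p decrease as p increases. -/
/-- Monotonicity of the networks `G_p`: for `1 ≤ p ≤ q` and any route
`k₀, k₁, …, k_m` (`m ≥ 1`) in a metric space, if the `q`th-power cost of the
route is at least `d(k₀, k_m)^q`, then the `p`th-power cost is at least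
`d(k₀, k_m)^p`. Consequently every edge of `G_q` is an edge of `G_p`. -/
theorem kumar_networks_decrease {α : Type*} [MetricSpace α]
    (p q : ℝ) (hp : 1 ≤ p) (hpq : p ≤ q)
    (m : ℕ) (hm : 1 ≤ m) (k : ℕ → α)
    (hq : dist (k 0) (k m) ^ q ≤ ∑ i ∈ Finset.range m, dist (k i) (k (i + 1)) ^ q) :
    dist (k 0) (k m) ^ p ≤ ∑ i ∈ Finset.range m, dist (k i) (k (i + 1)) ^ p := by
  have hp0 : (0:ℝ) < p := by linarith
  set D := dist (k 0) (k m) with hDdef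
  have hD0 : 0 ≤ D := dist_nonneg
  rcases eq_or_lt_of_le hD0 with h0 | hpos
  · rw [← h0, Real.zero_rpow hp0.ne']
    exact Finset.sum_nonneg fun i _ => Real.rpow_nonneg dist_nonneg p
  by_cases hex : ∃ i ∈ Finset.range m, D ≤ dist (k i) (k (i+1))
  · obtain ⟨i, hi, hdi⟩ := hex
    calc D ^ p ≤ dist (k i) (k (i+1)) ^ p :=
          Real.rpow_le_rpow hD0 hdi hp0.le
      _ ≤ _ := Finset.single_le_sum (f := fun j => dist (k j) (k (j+1)) ^ p)
          (fun j _ => Real.rpow_nonneg dist_nonneg p) hi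
  · push_neg at hex
    have key : ∀ i ∈ Finset.range m,
        dist (k i) (k (i+1)) ^ q ≤ dist (k i) (k (i+1)) ^ p * D ^ (q - p) := by
      intro i hi
      have hd0 : 0 ≤ dist (k i) (k (i+1)) := dist_nonneg
      rcases eq_or_lt_of_le hd0 with h | h
      · rw [← h, Real.zero_rpow (by linarith : q ≠ 0), Real.zero_rpow hp0.ne', zero_mul]
      · conv_lhs => rw [show q = p + (q - p) by ring, Real.rpow_add h]
        exact mul_le_mul_of_nonneg_left
          (Real.rpow_le_rpow hd0 (hex i hi).le (by linarith))
          (Real.rpow_nonneg hd0 p)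
    have h1 : D ^ p * D ^ (q - p) ≤ (∑ i ∈ Finset.range m, dist (k i) (k (i+1)) ^ p) * D ^ (q - p) := by
      rw [← Real.rpow_add hpos, Finset.sum_mul]
      calc D ^ (p + (q - p)) = D ^ q := by ring_nf
        _ ≤ ∑ i ∈ Finset.range m, dist (k i) (k (i+1)) ^ q := hq
        _ ≤ _ := Finset.sum_le_sum key
    exact le_of_mul_le_mul_right h1 (Real.rpow_pos_of_pos hpos (q - p))
end
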